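/- Let |·| be a norm on ℝⁿ with induced logarithmic norm μ, and let c ∈ ℝ. If x : [t₀, T] → ℝⁿ is differentiable at t ∈ (t₀, T) and ẋ(t) = M x(t) for some matrix M ∈ ℝⁿˣⁿ with μ(M) ≤ c, then the upper right Dini derivative of the function τ ↦ |x(τ)| at t satisfies D⁺|x(t)| ≤ c|x(t)|, where D⁺g(t) = limsup_{h→0⁺} (g(t+h) − g(t))/h. -/

import Mathlib

open Filter Topology Set Matrix

/-- `N` is a norm on `ℝⁿ`. -/
def IsNorm {n : ℕ} (N : (Fin n → ℝ) → ℝ) : Prop :=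
  (∀ x y, N (x + y) ≤ N x + N y) ∧
  (∀ (a : ℝ) (x : Fin n → ℝ), N (a • x) = |a| * N x) ∧
  (∀ x, N x = 0 → x = 0)

/-- The operator norm on `ℝⁿˣⁿ` induced by the norm `N`. -/
noncomputable def opNorm {n : ℕ} (N : (Fin n → ℝ) → ℝ) (A : Matrix (Fin n) (Fin n) ℝ) : ℝ :=
  sSup ((fun x => N (A.mulVec x)) '' {x | N x = 1})

/-- The logarithmic norm `μ(A) = lim_{h → 0⁺} (‖I + hA‖ - 1)/h` induced by the norm `N`. -/
noncomputable def logNorm {n : ℕ} (N : (Fin n → ℝ) → ℝ) (A : Matrix (Fin n) (Fin n) ℝ) : ℝ :=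
  limUnder (𝓝[>] (0 : ℝ)) (fun h => (opNorm N (1 + h • A) - 1) / h)

/-- The upper right Dini derivative `D⁺g(t) = limsup_{h → 0⁺} (g(t+h) - g(t))/h`. -/
noncomputable def diniDeriv (g : ℝ → ℝ) (t : ℝ) : ℝ :=
  Filter.limsup (fun h => (g (t + h) - g t) / h) (𝓝[>] (0 : ℝ))

section Aux

variable {n : ℕ} {N : (Fin n → ℝ) → ℝ}

lemma NL.nonneg (hN : IsNorm N) (y : Fin n → ℝ) : 0 ≤ N y := by
  have hz : N 0 = 0 := by simpa using hN.2.1 0 0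
  have ha : N (-y) = N y := by simpa using hN.2.1 (-1) y
  have := hN.1 y (-y)
  rw [add_neg_cancel, hz, ha] at this
  linarith

lemma NL.zero (hN : IsNorm N) : N 0 = 0 := by simpa using hN.2.1 0 0

lemma NL.abs_sub_le (hN : IsNorm N) (u v : Fin n → ℝ) : |N u - N v| ≤ N (u - v) := by
  have hneg : N (v - u) = N (u - v) := by
    have h := hN.2.1 (-1) (u - v)
    simp only [neg_smul, one_smul, abs_neg, abs_one, one_mul, neg_sub] at h
    exact h
  rw [abs_sub_le_iff]
  constructor
  · have h := hN.1 (u - v) v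
    simpa using h
  · have h := hN.1 (v - u) u
    rw [hneg] at h
    have h2 : v - u + u = v := by abel
    rw [h2] at h
    linarith

/-- Any subadditive absolutely homogeneous function is dominated by the sup norm. -/
lemma NL.upper_aux (N' : (Fin n → ℝ) → ℝ)
    (h1 : ∀ x y, N' (x + y) ≤ N' x + N' y)
    (h2 : ∀ (a : ℝ) (x : Fin n → ℝ), N' (a • x) = |a| * N' x) :
    ∃ K ≥ 0, ∀ x, N' x ≤ K * ‖x‖ := by
  have hz : N' 0 = 0 := by simpa using h2 0 0
  have hnn : ∀ y, 0 ≤ N' y := by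
    intro y
    have ha : N' (-y) = N' y := by simpa using h2 (-1) y
    have := h1 y (-y)
    rw [add_neg_cancel, hz, ha] at this
    linarith
  set K := ∑ i : Fin n, N' (fun j => if i = j then (1 : ℝ) else 0) with hK
  refine ⟨K, Finset.sum_nonneg fun i _ => hnn _, fun x => ?_⟩
  calc N' x = N' (∑ i, (x i) • fun j => if i = j then (1 : ℝ) else 0) := by
        rw [← pi_eq_sum_univ]
    _ ≤ ∑ i, N' ((x i) • fun j => if i = j then (1 : ℝ) else 0) :=
        Finset.le_sum_of_subadditive N' hz.le h1 _ _
    _ = ∑ i, |x i| * N' (fun j => if i = j then (1 : ℝ) else 0) := by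
        simp only [h2]
    _ ≤ ∑ i, ‖x‖ * N' (fun j => if i = j then (1 : ℝ) else 0) := by
        refine Finset.sum_le_sum fun i _ => ?_
        have : |x i| ≤ ‖x‖ := by simpa using norm_le_pi_norm x i
        exact mul_le_mul_of_nonneg_right this (hnn _)
    _ = K * ‖x‖ := by rw [← Finset.mul_sum, mul_comm]

lemma NL.upper (hN : IsNorm N) : ∃ K ≥ 0, ∀ x, N x ≤ K * ‖x‖ :=
  NL.upper_aux N hN.1 hN.2.1

lemma NL.continuous (hN : IsNorm N) : Continuous N := by
  obtain ⟨K, hK0, hK⟩ := NL.upper hN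
  refine (LipschitzWith.of_dist_le_mul (K := K.toNNReal) fun u v => ?_).continuous
  rw [Real.dist_eq, dist_eq_norm]
  calc |N u - N v| ≤ N (u - v) := NL.abs_sub_le hN u v
    _ ≤ K * ‖u - v‖ := hK _
    _ ≤ K.toNNReal * ‖u - v‖ := by
        exact mul_le_mul_of_nonneg_right (le_max_left _ _) (norm_nonneg _)

lemma NL.lower (hN : IsNorm N) (hn : Nonempty (Fin n)) :
    ∃ m > 0, ∀ x, m * ‖x‖ ≤ N x := by
  haveI := hn
  obtain ⟨x₀, hx₀s, hx₀min⟩ := (isCompact_sphere (0 : Fin n → ℝ) 1).exists_isMinOn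
    (NormedSpace.sphere_nonempty.mpr zero_le_one) (NL.continuous hN).continuousOn
  have hx₀norm : ‖x₀‖ = 1 := mem_sphere_zero_iff_norm.mp hx₀s
  have hx₀ne : x₀ ≠ 0 := by intro h; rw [h] at hx₀norm; simp at hx₀norm
  have hm : 0 < N x₀ :=
    lt_of_le_of_ne (NL.nonneg hN x₀) fun h => hx₀ne (hN.2.2 _ h.symm)
  refine ⟨N x₀, hm, fun x => ?_⟩
  rcases eq_or_ne x 0 with rfl | hx
  · simp [NL.zero hN]
  · have hxn : 0 < ‖x‖ := norm_pos_iff.mpr hx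
    have hu : ‖x‖⁻¹ • x ∈ Metric.sphere (0 : Fin n → ℝ) 1 := by
      rw [mem_sphere_zero_iff_norm, norm_smul]
      simp [abs_of_pos (inv_pos.mpr hxn), inv_mul_cancel₀ hxn.ne']
    have h1 : N x₀ ≤ N (‖x‖⁻¹ • x) := hx₀min hu
    rw [hN.2.1, abs_of_pos (inv_pos.mpr hxn)] at h1
    have := mul_le_mul_of_nonneg_right h1 hxn.le
    calc N x₀ * ‖x‖ ≤ ‖x‖⁻¹ * N x * ‖x‖ := this
      _ = N x := by field_simp

lemma NL.exists_one (hN : IsNorm N) (hn : Nonempty (Fin n)) : ∃ x, N x = 1 := by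
  haveI := hn
  set w : Fin n → ℝ := fun _ => (1 : ℝ) with hw
  have hv : w ≠ 0 := by
    intro h
    have h2 : w (Classical.arbitrary (Fin n)) = 0 := by rw [h]; rfl
    simp [hw] at h2
  have hNv : 0 < N w :=
    lt_of_le_of_ne (NL.nonneg hN _) fun h => hv (hN.2.2 _ h.symm)
  refine ⟨(N w)⁻¹ • w, ?_⟩
  rw [hN.2.1, abs_of_pos (inv_pos.mpr hNv), inv_mul_cancel₀ hNv.ne']

lemma NL.opNorm_bddAbove (hN : IsNorm N) (hn : Nonempty (Fin n))
    (A : Matrix (Fin n) (Fin n) ℝ) :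
    BddAbove ((fun x => N (A.mulVec x)) '' {x | N x = 1}) := by
  obtain ⟨m, hm, hlow⟩ := NL.lower hN hn
  obtain ⟨K, hK0, hK⟩ := NL.upper_aux (fun x => N (A.mulVec x))
    (fun a b => by
      show N (A.mulVec (a + b)) ≤ N (A.mulVec a) + N (A.mulVec b)
      rw [Matrix.mulVec_add]; exact hN.1 _ _)
    (fun a b => by
      show N (A.mulVec (a • b)) = |a| * N (A.mulVec b)
      rw [Matrix.mulVec_smul, hN.2.1])
  refine ⟨K * m⁻¹, ?_⟩
  rintro _ ⟨y, hy, rfl⟩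
  have hy1 : N y = 1 := hy
  have h1 : ‖y‖ ≤ m⁻¹ := by
    have h2 := hlow y
    rw [hy1] at h2
    rw [show m⁻¹ = 1 / m by ring, le_div_iff₀ hm]
    linarith
  calc N (A.mulVec y) ≤ K * ‖y‖ := hK y
    _ ≤ K * m⁻¹ := mul_le_mul_of_nonneg_left h1 hK0

lemma NL.mulVec_le (hN : IsNorm N) (hn : Nonempty (Fin n))
    (A : Matrix (Fin n) (Fin n) ℝ) (v : Fin n → ℝ) :
    N (A.mulVec v) ≤ opNorm N A * N v := by
  rcases eq_or_ne v 0 with rfl | hv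
  · simp [Matrix.mulVec_zero, NL.zero hN]
  · have hNv : 0 < N v := lt_of_le_of_ne (NL.nonneg hN v) fun h => hv (hN.2.2 _ h.symm)
    have hu : N ((N v)⁻¹ • v) = 1 := by
      rw [hN.2.1, abs_of_pos (inv_pos.mpr hNv), inv_mul_cancel₀ hNv.ne']
    have hle : N (A.mulVec ((N v)⁻¹ • v)) ≤ opNorm N A :=
      le_csSup (NL.opNorm_bddAbove hN hn A) ⟨_, hu, rfl⟩
    rw [Matrix.mulVec_smul, hN.2.1, abs_of_pos (inv_pos.mpr hNv)] at hle
    calc N (A.mulVec v) = (N v)⁻¹ * N (A.mulVec v) * N v := by field_simp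
      _ ≤ opNorm N A * N v := mul_le_mul_of_nonneg_right hle hNv.le

lemma NL.opNorm_le (hN : IsNorm N) (hn : Nonempty (Fin n))
    (A : Matrix (Fin n) (Fin n) ℝ) (b : ℝ)
    (hb : ∀ x, N x = 1 → N (A.mulVec x) ≤ b) : opNorm N A ≤ b := by
  obtain ⟨x₁, hx₁⟩ := NL.exists_one hN hn
  refine csSup_le ⟨_, ⟨x₁, hx₁, rfl⟩⟩ ?_
  rintro _ ⟨y, hy, rfl⟩
  exact hb y hy

lemma NL.opNorm_one (hN : IsNorm N) (hn : Nonempty (Fin n)) :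
    opNorm N (1 : Matrix (Fin n) (Fin n) ℝ) = 1 := by
  obtain ⟨x₁, hx₁⟩ := NL.exists_one hN hn
  refine le_antisymm (NL.opNorm_le hN hn _ _ fun x hx => by rw [Matrix.one_mulVec, hx]) ?_
  have := le_csSup (NL.opNorm_bddAbove hN hn 1) (Set.mem_image_of_mem _ (show x₁ ∈ {x | N x = 1} from hx₁))
  rwa [Matrix.one_mulVec, hx₁] at this

lemma NL.opNorm_add_le (hN : IsNorm N) (hn : Nonempty (Fin n))
    (A B : Matrix (Fin n) (Fin n) ℝ) :
    opNorm N (A + B) ≤ opNorm N A + opNorm N B := by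
  refine NL.opNorm_le hN hn _ _ fun y hy => ?_
  rw [Matrix.add_mulVec]
  calc N (A.mulVec y + B.mulVec y) ≤ N (A.mulVec y) + N (B.mulVec y) := hN.1 _ _
    _ ≤ opNorm N A * N y + opNorm N B * N y :=
        add_le_add (NL.mulVec_le hN hn A y) (NL.mulVec_le hN hn B y)
    _ = opNorm N A + opNorm N B := by rw [hy]; ring

lemma NL.opNorm_smul_le (hN : IsNorm N) (hn : Nonempty (Fin n))
    (a : ℝ) (A : Matrix (Fin n) (Fin n) ℝ) :
    opNorm N (a • A) ≤ |a| * opNorm N A := by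
  refine NL.opNorm_le hN hn _ _ fun y hy => ?_
  rw [Matrix.smul_mulVec, hN.2.1]
  have := NL.mulVec_le hN hn A y
  rw [hy, mul_one] at this
  exact mul_le_mul_of_nonneg_left this (abs_nonneg a)

end Aux

theorem stmt1 {n : ℕ} (N : (Fin n → ℝ) → ℝ) (hN : IsNorm N) (c : ℝ)
    (M : Matrix (Fin n) (Fin n) ℝ) (hM : logNorm N M ≤ c)
    (t₀ T : ℝ) (x : ℝ → Fin n → ℝ) (t : ℝ) (ht : t ∈ Ioo t₀ T)
    (hx : HasDerivAt x (M.mulVec (x t)) t) :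
    diniDeriv (fun τ => N (x τ)) t ≤ c * N (x t) := by
  rcases isEmpty_or_nonempty (Fin n) with hn | hn
  · -- trivial case `n = 0`
    haveI : Subsingleton (Fin n → ℝ) := ⟨fun a b => funext fun i => (hn.false i).elim⟩
    have hx0 : ∀ τ, x τ = x t := fun τ => Subsingleton.elim _ _
    have hxt : x t = 0 := Subsingleton.elim _ _
    have : (fun h => ((fun τ => N (x τ)) (t + h) - (fun τ => N (x τ)) t) / h)
        = fun _ => (0 : ℝ) := by
      funext h
      simp [hx0 (t + h)]
    rw [diniDeriv, this, limsup_const]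
    rw [hxt, NL.zero hN, mul_zero]
  · -- main case
    set g : ℝ → ℝ := fun h => (opNorm N (1 + h • M) - 1) / h with hg
    -- monotonicity of `g` on `Ioi 0`
    have hmono : MonotoneOn g (Ioi (0 : ℝ)) := by
      rintro h₁ (h₁pos : (0:ℝ) < h₁) h₂ (h₂pos : (0:ℝ) < h₂) h12
      set r := h₁ / h₂ with hr
      have hrh : r * h₂ = h₁ := div_mul_cancel₀ _ h₂pos.ne'
      have hr0 : 0 ≤ r := div_nonneg h₁pos.le h₂pos.le
      have hr1 : r ≤ 1 := by rw [hr, div_le_one h₂pos]; exact h12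
      have hdecomp : (1 : Matrix (Fin n) (Fin n) ℝ) + h₁ • M
          = (1 - r) • (1 : Matrix (Fin n) (Fin n) ℝ) + r • (1 + h₂ • M) := by
        have : (1 - r) • (1 : Matrix (Fin n) (Fin n) ℝ) + r • (1 + h₂ • M)
            = 1 + (r * h₂) • M := by module
        rw [this, hrh]
      have hkey : opNorm N (1 + h₁ • M)
          ≤ (1 - r) + r * opNorm N (1 + h₂ • M) := by
        rw [hdecomp]
        calc opNorm N ((1 - r) • (1 : Matrix (Fin n) (Fin n) ℝ) + r • (1 + h₂ • M))
            ≤ opNorm N ((1 - r) • (1 : Matrix (Fin n) (Fin n) ℝ))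
              + opNorm N (r • (1 + h₂ • M)) := NL.opNorm_add_le hN hn _ _
          _ ≤ |1 - r| * opNorm N (1 : Matrix (Fin n) (Fin n) ℝ)
              + |r| * opNorm N (1 + h₂ • M) :=
              add_le_add (NL.opNorm_smul_le hN hn _ _) (NL.opNorm_smul_le hN hn _ _)
          _ = (1 - r) + r * opNorm N (1 + h₂ • M) := by
              rw [NL.opNorm_one hN hn, abs_of_nonneg (by linarith : (0:ℝ) ≤ 1 - r),
                abs_of_nonneg hr0, mul_one]
      show (opNorm N (1 + h₁ • M) - 1) / h₁ ≤ (opNorm N (1 + h₂ • M) - 1) / h₂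
      rw [div_le_div_iff₀ h₁pos h₂pos]
      have e1 : r * opNorm N (1 + h₂ • M) * h₂ = opNorm N (1 + h₂ • M) * h₁ := by
        rw [mul_comm r (opNorm N (1 + h₂ • M)), mul_assoc, hrh]
      have e2 := mul_le_mul_of_nonneg_right
        (show opNorm N (1 + h₁ • M) - 1 ≤ r * (opNorm N (1 + h₂ • M) - 1) by linarith)
        h₂pos.le
      nlinarith [e1, e2, hrh]
    -- lower bound of `g` on `Ioi 0`
    have hlow : ∀ h ∈ Ioi (0 : ℝ), -opNorm N M ≤ g h := by
      rintro h (hpos : (0:ℝ) < h)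
      obtain ⟨x₁, hx₁⟩ := NL.exists_one hN hn
      have hsplit : (1 : Matrix (Fin n) (Fin n) ℝ)
          = (1 + h • M) + (-h) • M := by module
      have h1 : (1 : ℝ) ≤ opNorm N (1 + h • M) + h * opNorm N M := by
        have : N x₁ ≤ N ((1 + h • M).mulVec x₁) + N (((-h) • M).mulVec x₁) := by
          calc N x₁ = N (((1 + h • M) + (-h) • M).mulVec x₁) := by
                rw [← hsplit, Matrix.one_mulVec]
            _ = N ((1 + h • M).mulVec x₁ + ((-h) • M).mulVec x₁) := by
                rw [Matrix.add_mulVec]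
            _ ≤ _ := hN.1 _ _
        have h2 := NL.mulVec_le hN hn (1 + h • M) x₁
        have h3 := NL.mulVec_le hN hn ((-h) • M) x₁
        have h4 : opNorm N ((-h) • M) ≤ h * opNorm N M := by
          have := NL.opNorm_smul_le hN hn (-h) M
          rwa [abs_neg, abs_of_pos hpos] at this
        rw [hx₁, mul_one] at h2 h3
        linarith
      rw [hg]
      rw [le_div_iff₀ hpos]
      linarith
    -- existence of the limit
    have hbdd : BddBelow (g '' Ioi (0 : ℝ)) := by
      refine ⟨-opNorm N M, ?_⟩
      rintro _ ⟨h, hh, rfl⟩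
      exact hlow h hh
    have htend : Tendsto g (𝓝[>] (0 : ℝ)) (𝓝 (sInf (g '' Ioi 0))) :=
      hmono.tendsto_nhdsGT hbdd
    set L := sInf (g '' Ioi (0 : ℝ)) with hL
    have hlogeq : logNorm N M = L := htend.limUnder_eq
    have hLc : L ≤ c := hlogeq ▸ hM
    -- the difference quotient of the solution tends to the derivative
    set v := x t with hv
    set Mv := M.mulVec (x t) with hMv
    have hslope : Tendsto (fun h : ℝ => h⁻¹ • (x (t + h) - x t)) (𝓝[>] (0:ℝ)) (𝓝 Mv) := by
      have h1 := hasDerivAt_iff_tendsto_slope.mp hx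
      have h2 : Tendsto (fun h : ℝ => t + h) (𝓝[>] (0:ℝ)) (𝓝[≠] t) := by
        apply tendsto_nhdsWithin_of_tendsto_nhds_of_eventually_within
        · have : Tendsto (fun h : ℝ => t + h) (𝓝 (0:ℝ)) (𝓝 t) := by
            simpa using (continuous_add_left t).tendsto (0 : ℝ)
          exact this.mono_left nhdsWithin_le_nhds
        · filter_upwards [self_mem_nhdsWithin] with h hh
          simp only [mem_compl_iff, mem_singleton_iff]
          intro hc
          have : h = 0 := by linarith [hc]
          exact absurd this (ne_of_gt hh)
      exact (h1.comp h2).congr fun h => by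
        simp only [Function.comp_apply, slope_def_module, add_sub_cancel_left]
    -- continuity of N along a limit
    have hNcont : ∀ {α : Type} {l : Filter α} {f : α → Fin n → ℝ} {a : Fin n → ℝ},
        Tendsto f l (𝓝 a) → Tendsto (fun z => N (f z)) l (𝓝 (N a)) := by
      intro α l f a hf
      exact ((NL.continuous hN).tendsto a).comp hf
    -- the remainder term
    have hrem : Tendsto (fun h : ℝ => N (h⁻¹ • (x (t + h) - x t) - Mv)) (𝓝[>] (0:ℝ))
        (𝓝 0) := by
      have h0 : Tendsto (fun h : ℝ => h⁻¹ • (x (t + h) - x t) - Mv) (𝓝[>] (0:ℝ))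
          (𝓝 (Mv - Mv)) := hslope.sub tendsto_const_nhds
      rw [sub_self] at h0
      have := hNcont h0
      rwa [NL.zero hN] at this
    set u : ℝ → ℝ := fun h => g h * N v + N (h⁻¹ • (x (t + h) - x t) - Mv) with hu
    have htendu : Tendsto u (𝓝[>] (0:ℝ)) (𝓝 (L * N v + 0)) :=
      (htend.mul_const _).add hrem
    -- eventual bound on the difference quotient
    have hFu : ∀ᶠ h in 𝓝[>] (0:ℝ),
        ((fun τ => N (x τ)) (t + h) - (fun τ => N (x τ)) t) / h ≤ u h := by
      filter_upwards [self_mem_nhdsWithin] with h hh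
      have hpos : (0:ℝ) < h := hh
      have hexp : (1 + h • M).mulVec v = v + h • Mv := by
        rw [Matrix.add_mulVec, Matrix.one_mulVec, Matrix.smul_mulVec, hMv, hv]
      set rest := x (t + h) - (1 + h • M).mulVec v with hrest
      have htri : N (x (t + h)) ≤ opNorm N (1 + h • M) * N v + N rest := by
        have : x (t + h) = (1 + h • M).mulVec v + rest := by rw [hrest]; abel
        rw [this]
        exact le_trans (hN.1 _ _) (add_le_add_left (NL.mulVec_le hN hn _ _) _)
      have hresteq : h⁻¹ • rest = h⁻¹ • (x (t + h) - x t) - Mv := by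
        rw [hrest, hexp, hv,
          show x (t + h) - (x t + h • Mv) = (x (t + h) - x t) - h • Mv by abel,
          smul_sub, smul_smul, inv_mul_cancel₀ hpos.ne', one_smul]
      have hNrest : N (h⁻¹ • (x (t + h) - x t) - Mv) = h⁻¹ * N rest := by
        rw [← hresteq, hN.2.1, abs_of_pos (inv_pos.mpr hpos)]
      simp only [hu]
      rw [hNrest, hg]
      have hstep : N (x (t + h)) - N v ≤ (opNorm N (1 + h • M) - 1) * N v + N rest := by
        nlinarith [htri]
      calc (N (x (t + h)) - N (x t)) / h
          ≤ ((opNorm N (1 + h • M) - 1) * N v + N rest) / h := by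
            rw [← hv]
            apply div_le_div_of_nonneg_right hstep hpos.le
        _ = (opNorm N (1 + h • M) - 1) / h * N v + h⁻¹ * N rest := by ring
    -- conclude via limsup comparison
    have hvlow : Tendsto (fun h : ℝ => N (h⁻¹ • (x (t + h) - x t))) (𝓝[>] (0:ℝ))
        (𝓝 (N Mv)) := hNcont hslope
    have hcobdd : IsCoboundedUnder (· ≤ ·) (𝓝[>] (0:ℝ))
        (fun h => ((fun τ => N (x τ)) (t + h) - (fun τ => N (x τ)) t) / h) := by
      apply isCoboundedUnder_le_of_eventually_le (𝓝[>] (0:ℝ)) (x := -(N Mv + 1))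
      have hub : ∀ᶠ h in 𝓝[>] (0:ℝ), N (h⁻¹ • (x (t + h) - x t)) < N Mv + 1 :=
        hvlow.eventually (gt_mem_nhds (lt_add_one _))
      filter_upwards [hub, self_mem_nhdsWithin] with h h1 hh
      have hpos : (0:ℝ) < h := hh
      have ha : N (x t) - N (x (t + h)) ≤ N (x (t + h) - x t) := by
        have h0 := abs_le.mp (NL.abs_sub_le hN (x (t + h)) (x t))
        linarith [h0.1]
      have hb : N (h⁻¹ • (x (t + h) - x t)) = h⁻¹ * N (x (t + h) - x t) := by
        rw [hN.2.1, abs_of_pos (inv_pos.mpr hpos)]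
      rw [hb] at h1
      have h3 : N (x (t + h) - x t) ≤ (N Mv + 1) * h := by
        calc N (x (t + h) - x t) = h⁻¹ * N (x (t + h) - x t) * h := by field_simp
          _ ≤ (N Mv + 1) * h := mul_le_mul_of_nonneg_right h1.le hpos.le
      show -(N Mv + 1) ≤ (N (x (t + h)) - N (x t)) / h
      rw [le_div_iff₀ hpos]
      linarith
    have hbddu : IsBoundedUnder (· ≤ ·) (𝓝[>] (0:ℝ)) u :=
      htendu.isBoundedUnder_le
    have hlim : diniDeriv (fun τ => N (x τ)) t ≤ L * N v + 0 := by
      rw [diniDeriv]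
      calc limsup (fun h => ((fun τ => N (x τ)) (t + h) - (fun τ => N (x τ)) t) / h)
            (𝓝[>] (0:ℝ))
          ≤ limsup u (𝓝[>] (0:ℝ)) := limsup_le_limsup hFu hcobdd hbddu
        _ = L * N v + 0 := htendu.limsup_eq
    calc diniDeriv (fun τ => N (x τ)) t ≤ L * N v + 0 := hlim
      _ = L * N v := by ring
      _ ≤ c * N v := mul_le_mul_of_nonneg_right hLc (NL.nonneg hN v)
      _ = c * N (x t) := by rw [hv]
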